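/- Let P be a potential graph with barrier digraph V, and let S ⊊ N be such that T_S ≠ ∅ and P has at least one edge joining a vertex of S to a vertex of N \ S. Then λ°_S − λ^•_S = min { p_{qr} : q ∈ S, r ∉ S, (q,r) an edge of P } − min_{t ∈ S} p_{tt}. -/

import Mathlib

open scoped Classical

namespace BarrierForests

variable {α : Type*} [Fintype α] [DecidableEq α]

/-- Total weight of a set of arcs. -/
def aweight (v : α → α → ℝ) (A : Finset (α × α)) : ℝ := ∑ a ∈ A, v a.1 a.2

/-- Weight `Υ^A_S` of the arcs of `A` whose tail lies in `S`. -/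
def aweightOn (v : α → α → ℝ) (A : Finset (α × α)) (S : Finset α) : ℝ :=
  ∑ a ∈ A.filter (fun a => a.1 ∈ S), v a.1 a.2

/-- The relation "there is an arc from `i` to `j` in `A`". -/
def arcRel (A : Finset (α × α)) : α → α → Prop := fun i j => (i, j) ∈ A

/-- Entering forest: every vertex has out-degree at most one, and there are no
directed cycles. -/
def IsEForest (A : Finset (α × α)) : Prop :=
  (∀ i j j', (i, j) ∈ A → (i, j') ∈ A → j = j') ∧
  ∀ i, ¬ Relation.TransGen (arcRel A) i i

/-- Roots of a (spanning) entering forest: the vertices with no outgoing arc. -/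
noncomputable def rootSet (A : Finset (α × α)) : Finset α :=
  Finset.univ.filter fun i => ∀ j, (i, j) ∉ A

/-- `𝓕^k`: spanning entering forests of the digraph with arc set `E`
having exactly `k` trees (equivalently, `k` roots). -/
def FSet (E : Finset (α × α)) (k : ℕ) : Set (Finset (α × α)) :=
  {A | A ⊆ E ∧ IsEForest A ∧ (rootSet A).card = k}

/-- The infimum (in `EReal`, so `⊤` for the empty family) of the `w`-weights of the
members of `s`. -/
noncomputable def minW {β : Type*} (s : Set β) (w : β → ℝ) : EReal :=
  sInf ((fun x => (w x : EReal)) '' s)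

/-- `φ^k`: minimum weight of a spanning entering forest with `k` trees. -/
noncomputable def phi (v : α → α → ℝ) (E : Finset (α × α)) (k : ℕ) : EReal :=
  minW (FSet E k) (aweight v)

/-- `F ∈ 𝓕̃^k`: minimal spanning entering forest with `k` trees. -/
def IsMinForest (v : α → α → ℝ) (E : Finset (α × α)) (k : ℕ) (F : Finset (α × α)) : Prop :=
  F ∈ FSet E k ∧ (aweight v F : EReal) = phi v E k

/-- Vertex set of the tree `T^F_i` of the entering forest `F` rooted at `i`:
all vertices from which `i` is reachable. -/
noncomputable def treeVerts (F : Finset (α × α)) (i : α) : Finset α :=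
  Finset.univ.filter fun j => Relation.ReflTransGen (arcRel F) j i

/-- Arc set of the tree `T^F_i`. -/
noncomputable def treeArcs (F : Finset (α × α)) (i : α) : Finset (α × α) :=
  F.filter fun a => a.1 ∈ treeVerts F i

/-- Induced subgraph (restriction) of the arc set `A` on the vertex set `S`. -/
def restrictArcs (A : Finset (α × α)) (S : Finset α) : Finset (α × α) :=
  A.filter fun a => a.1 ∈ S ∧ a.2 ∈ S

/-- `T ∈ 𝓣^{•q}_S`: `T` is an entering tree that is a subgraph of the digraph with
arc set `E`, with vertex set `S` and root `q`. -/
def IsTreeOn (E T : Finset (α × α)) (S : Finset α) (q : α) : Prop :=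
  q ∈ S ∧ T ⊆ E ∧ (∀ a ∈ T, a.1 ∈ S ∧ a.2 ∈ S) ∧
  (∀ i ∈ S, i ≠ q → ∃! j, (i, j) ∈ T) ∧
  (∀ j, (q, j) ∉ T) ∧
  ∀ i ∈ S, Relation.ReflTransGen (arcRel T) i q

/-- `λ^{•q}_S`. -/
noncomputable def lamB (v : α → α → ℝ) (E : Finset (α × α)) (S : Finset α) (q : α) : EReal :=
  minW {T | IsTreeOn E T S q} (aweight v)

/-- `λ^•_S = min_{q ∈ S} λ^{•q}_S`. -/
noncomputable def lamBul (v : α → α → ℝ) (E : Finset (α × α)) (S : Finset α) : EReal :=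
  minW {T | ∃ q ∈ S, IsTreeOn E T S q} (aweight v)

/-- `T ∈ 𝓣^{∘q}_S`: `T` has `|S| + 1` vertices, `T|_S` is an entering tree with vertex
set `S` and root `q`, and the single arc of `T` leaving `S` goes from `q` to the root
`r ∉ S` of `T`. -/
def IsCTreeOn (E T : Finset (α × α)) (S : Finset α) (q : α) : Prop :=
  ∃ r, r ∉ S ∧ ∃ T', IsTreeOn E T' S q ∧ (q, r) ∈ E ∧ T = insert (q, r) T'

/-- `λ^{∘q}_S`. -/
noncomputable def lamC (v : α → α → ℝ) (E : Finset (α × α)) (S : Finset α) (q : α) : EReal :=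
  minW {T | IsCTreeOn E T S q} (aweight v)

/-- `λ^∘_S = min_{q ∈ S} λ^{∘q}_S`. -/
noncomputable def lamCirc (v : α → α → ℝ) (E : Finset (α × α)) (S : Finset α) : EReal :=
  minW {T | ∃ q ∈ S, IsCTreeOn E T S q} (aweight v)

/-- `μ^∘_S`: minimum of `Υ^F_S` over the spanning entering forests `F ∈ 𝓕^∘_S`,
i.e. those in which every vertex of `S` has an outgoing arc. -/
noncomputable def muCirc (v : α → α → ℝ) (E : Finset (α × α)) (S : Finset α) : EReal :=
  minW {A | A ⊆ E ∧ IsEForest A ∧ ∀ i ∈ S, ∃ j, (i, j) ∈ A} fun A => aweightOn v A S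

/-- `G ∈ 𝓡^F_y`: `G` is a descendant of `F` at the root `y`, i.e. `y` is a root of
`F`, the roots of `G` are those of `F` except `y`, `G` induces `T^F_q` on the vertex
set of every tree of `F` other than `T^F_y`, and `G` induces a tree on the vertex set
of `T^F_y`. -/
def IsDescendant (E F G : Finset (α × α)) (y : α) : Prop :=
  y ∈ rootSet F ∧ rootSet G = rootSet F \ {y} ∧
  (∀ q ∈ rootSet G, restrictArcs G (treeVerts F q) = treeArcs F q) ∧
  ∃ a ∈ treeVerts F y, IsTreeOn E (restrictArcs G (treeVerts F y)) (treeVerts F y) a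

/-- A potential graph: a connected weighted undirected graph with a loop at every
vertex.  Edges are recorded as a symmetric reflexive set of ordered pairs, with a
symmetric weight function `p`. -/
structure PotGraph (α : Type*) [Fintype α] [DecidableEq α] where
  p : α → α → ℝ
  edges : Finset (α × α)
  symm_mem : ∀ i j, (i, j) ∈ edges → (j, i) ∈ edges
  loop_mem : ∀ i, (i, i) ∈ edges
  symm_w : ∀ i j, p i j = p j i
  connected : ∀ i j : α, Relation.ReflTransGen (fun a b => (a, b) ∈ edges ∧ a ≠ b) i j

/-- Arc set of the barrier digraph of the potential graph `P`: an arc `(i,j)`, `i ≠ j`,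
for each non-loop edge of `P`. -/
def barcs (P : PotGraph α) : Finset (α × α) := P.edges.filter fun a => a.1 ≠ a.2

/-- Arc weights of the barrier digraph: `v i j = p i j - p i i`. -/
def bw (P : PotGraph α) : α → α → ℝ := fun i j => P.p i j - P.p i i

/-- Weight of a set of undirected edges of `P`. -/
noncomputable def uweight (P : PotGraph α) (T : Finset (Sym2 α)) : ℝ :=
  ∑ e ∈ T, Sym2.lift ⟨P.p, P.symm_w⟩ e

/-- `T ∈ 𝓣_S`: `T` is an undirected tree that is a subgraph of `P` (loops unused)
with vertex set `S`: its edges are non-loop edges of `P` joining vertices of `S`,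
it is connected on `S`, and it has `|S| - 1` edges. -/
def IsUTreeOn (P : PotGraph α) (T : Finset (Sym2 α)) (S : Finset α) : Prop :=
  (∀ e ∈ T, ∃ i j, i ≠ j ∧ e = s(i, j) ∧ (i, j) ∈ P.edges ∧ i ∈ S ∧ j ∈ S) ∧
  (∀ i ∈ S, ∀ j ∈ S, Relation.ReflTransGen (fun a b => s(a, b) ∈ T) i j) ∧
  T.card + 1 = S.card

/-- `ν_S`: minimum weight of an undirected tree on `S` that is a subgraph of `P`. -/
noncomputable def nu (P : PotGraph α) (S : Finset α) : EReal :=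
  minW {T | IsUTreeOn P T S} (uweight P)

/-- The underlying undirected edge set of a set of arcs. -/
def undir (A : Finset (α × α)) : Finset (Sym2 α) := A.image fun a => s(a.1, a.2)

/-- `Tq` is the entering tree (with root `q`, vertex set `S`, subgraph of the barrier
digraph of `P`) corresponding to the undirected tree `T`: it is obtained from `T` by
directing all edges toward `q` and replacing the weight of each arc `(i,j)` by
`v i j = p i j - p i i`. -/
def Corresponds (P : PotGraph α) (Tq : Finset (α × α)) (T : Finset (Sym2 α))
    (S : Finset α) (q : α) : Prop :=
  IsTreeOn (barcs P) Tq S q ∧ undir Tq = T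

/-- helper: minimum of a finite nonempty family is attained -/
theorem minW_exists {β : Type*} (s : Set β) (hfin : s.Finite) (hne : s.Nonempty) (w : β → ℝ) :
    ∃ x ∈ s, minW s w = (w x : EReal) ∧ ∀ y ∈ s, w x ≤ w y := by
  have himg : ((fun x => (w x : EReal)) '' s).Finite := hfin.image _
  have hine : ((fun x => (w x : EReal)) '' s).Nonempty := hne.image _
  obtain ⟨x, hx, hxe⟩ := hine.csInf_mem himg
  refine ⟨x, hx, hxe.symm, fun y hy => ?_⟩
  have h2 := sInf_le (Set.mem_image_of_mem (fun x => (w x : EReal)) hy)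
  rw [← hxe] at h2
  simp only at h2
  exact_mod_cast h2

theorem minW_le {β : Type*} {s : Set β} {x : β} (hx : x ∈ s) (w : β → ℝ) :
    minW s w ≤ (w x : EReal) :=
  sInf_le (Set.mem_image_of_mem _ hx)

theorem le_minW {β : Type*} {s : Set β} (w : β → ℝ) (c : EReal)
    (h : ∀ x ∈ s, c ≤ (w x : EReal)) : c ≤ minW s w := by
  refine le_sInf fun b hb => ?_
  obtain ⟨x, hx, rfl⟩ := hb
  exact h x hx

theorem image_fst_of_treeOn {E Tq : Finset (α × α)} {S : Finset α} {q : α}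
    (h : IsTreeOn E Tq S q) : Tq.image Prod.fst = S.erase q := by
  ext i
  simp only [Finset.mem_image, Finset.mem_erase]
  constructor
  · rintro ⟨a, ha, rfl⟩
    refine ⟨fun hq => h.2.2.2.2.1 a.2 ?_, (h.2.2.1 a ha).1⟩
    rwa [← hq]
  · rintro ⟨hiq, hiS⟩
    obtain ⟨j, hj, -⟩ := h.2.2.2.1 i hiS hiq
    exact ⟨(i, j), hj, rfl⟩

theorem fst_injOn_of_treeOn {E Tq : Finset (α × α)} {S : Finset α} {q : α}
    (h : IsTreeOn E Tq S q) : ∀ a ∈ Tq, ∀ b ∈ Tq, a.1 = b.1 → a = b := by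
  intro a ha b hb hab
  have haq : a.1 ≠ q := fun hq => h.2.2.2.2.1 a.2 (by rwa [← hq])
  obtain ⟨j, -, hu⟩ := h.2.2.2.1 a.1 (h.2.2.1 a ha).1 haq
  have h1 := hu a.2 ha
  have h2 := hu b.2 (by rw [hab]; exact hb)
  exact Prod.ext hab (by rw [h1, h2])

/-- no opposite pair of arcs in an entering tree -/
theorem no_two_cycle {E Tq : Finset (α × α)} {S : Finset α} {q : α}
    (h : IsTreeOn E Tq S q) {i j : α} (hij : (i, j) ∈ Tq) (hji : (j, i) ∈ Tq) : i = j := by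
  by_contra hne
  have hiS : i ∈ S := (h.2.2.1 _ hij).1
  have hjS : j ∈ S := (h.2.2.1 _ hji).1
  have hiq : i ≠ q := fun e => h.2.2.2.2.1 j (e ▸ hij)
  have hjq : j ≠ q := fun e => h.2.2.2.2.1 i (e ▸ hji)
  have key : ∀ x y, Relation.ReflTransGen (arcRel Tq) x y → (x = i ∨ x = j) → (y = i ∨ y = j) := by
    intro x y hxy
    induction hxy with
    | refl => exact id
    | tail _ harc ih =>
      intro hx
      rcases ih hx with rfl | rfl
      · obtain ⟨k, -, hu⟩ := h.2.2.2.1 _ hiS hiq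
        right; rw [hu _ harc, hu _ hij]
      · obtain ⟨k, -, hu⟩ := h.2.2.2.1 _ hjS hjq
        left; rw [hu _ harc, hu _ hji]
  rcases key i q (h.2.2.2.2.2 i hiS) (Or.inl rfl) with rfl | rfl
  · exact hiq rfl
  · exact hjq rfl

theorem undir_injOn {Tq : Finset (α × α)} {E : Finset (α × α)} {S : Finset α} {q : α}
    (h : IsTreeOn E Tq S q) :
    ∀ a ∈ Tq, ∀ b ∈ Tq, s(a.1, a.2) = s(b.1, b.2) → a = b := by
  intro a ha b hb hs
  rw [Sym2.eq_iff] at hs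
  rcases hs with ⟨h1, h2⟩ | ⟨h1, h2⟩
  · exact Prod.ext h1 h2
  · have hb' : (a.2, a.1) ∈ Tq := by
      have hbe : b = (a.2, a.1) := Prod.ext h2.symm h1.symm
      rwa [hbe] at hb
    have haa : a.1 = a.2 := no_two_cycle h (show (a.1, a.2) ∈ Tq from ha) hb'
    exact Prod.ext (haa.trans h2) (haa.symm.trans h1)

theorem symm_edge_rel {Tq : Finset (α × α)} {x y : α} (hxy : (x, y) ∈ Tq) :
    s(x, y) ∈ undir Tq ∧ s(y, x) ∈ undir Tq := by
  constructor
  · exact Finset.mem_image.2 ⟨(x, y), hxy, rfl⟩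
  · exact Finset.mem_image.2 ⟨(x, y), hxy, Sym2.eq_swap⟩

theorem rev_reach {Tq : Finset (α × α)} {x y : α}
    (h : Relation.ReflTransGen (arcRel Tq) x y) :
    Relation.ReflTransGen (fun a b => s(a, b) ∈ undir Tq) y x := by
  induction h with
  | refl => exact Relation.ReflTransGen.refl
  | tail _ harc ih => exact Relation.ReflTransGen.head (symm_edge_rel harc).2 ih

theorem undir_utree (P : PotGraph α) {Tq : Finset (α × α)} {S : Finset α} {q : α}
    (h : IsTreeOn (barcs P) Tq S q) : IsUTreeOn P (undir Tq) S := by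
  obtain ⟨hq, hsub, harcs, -, -, hreach⟩ := id h
  refine ⟨?_, ?_, ?_⟩
  · intro e he
    obtain ⟨a, ha, rfl⟩ := Finset.mem_image.1 he
    have hb := hsub ha
    rw [barcs, Finset.mem_filter] at hb
    exact ⟨a.1, a.2, hb.2, rfl, hb.1, (harcs a ha).1, (harcs a ha).2⟩
  · intro i hi j hj
    have h1 : Relation.ReflTransGen (fun a b => s(a, b) ∈ undir Tq) i q :=
      Relation.ReflTransGen.mono (fun a b hab => (symm_edge_rel hab).1) _ _ (hreach i hi)
    exact h1.trans (rev_reach (hreach j hj))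
  · have h1 : (undir Tq).card = Tq.card :=
      Finset.card_image_of_injOn (undir_injOn h)
    have h2 : Tq.card = (S.erase q).card := by
      rw [← image_fst_of_treeOn h, Finset.card_image_of_injOn (fst_injOn_of_treeOn h)]
    have h3 : 0 < S.card := Finset.card_pos.2 ⟨q, hq⟩
    rw [h1, h2, Finset.card_erase_of_mem hq]
    omega

theorem aweight_eq (P : PotGraph α) {Tq : Finset (α × α)} {S : Finset α} {q : α}
    (h : IsTreeOn (barcs P) Tq S q) :
    aweight (bw P) Tq = uweight P (undir Tq) - (∑ i ∈ S, P.p i i - P.p q q) := by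
  have h1 : uweight P (undir Tq) = ∑ a ∈ Tq, P.p a.1 a.2 := by
    rw [uweight, undir, Finset.sum_image (undir_injOn h)]
    refine Finset.sum_congr rfl fun a _ => ?_
    cases a
    simp
  have h2 : ∑ a ∈ Tq, P.p a.1 a.1 = ∑ i ∈ S.erase q, P.p i i := by
    rw [← image_fst_of_treeOn h, Finset.sum_image (fst_injOn_of_treeOn h)]
  have h3 : ∑ i ∈ S.erase q, P.p i i = ∑ i ∈ S, P.p i i - P.p q q :=
    Finset.sum_erase_eq_sub h.1
  rw [aweight, h1]
  simp only [bw, Finset.sum_sub_distrib, h2, h3]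

theorem orient (P : PotGraph α) :
    ∀ (n : ℕ) (T : Finset (Sym2 α)) (S : Finset α) (q : α),
      T.card = n → IsUTreeOn P T S → q ∈ S →
      ∃ Tq, IsTreeOn (barcs P) Tq S q ∧ undir Tq = T := by
  intro n
  induction n with
  | zero =>
    intro T S q hcard hT hq
    have hT0 : T = ∅ := Finset.card_eq_zero.1 hcard
    have hcnt := hT.2.2
    have hS1 : S.card = 1 := by omega
    obtain ⟨x, rfl⟩ := Finset.card_eq_one.1 hS1
    rw [Finset.mem_singleton] at hq
    subst hq
    subst hT0
    refine ⟨∅, ⟨Finset.mem_singleton_self q, Finset.empty_subset _, by simp, ?_, by simp, ?_⟩,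
      by simp [undir]⟩
    · intro i hi hiq
      rw [Finset.mem_singleton] at hi
      exact absurd hi hiq
    · intro i hi
      rw [Finset.mem_singleton] at hi
      subst hi
      exact Relation.ReflTransGen.refl
  | succ n ih =>
    intro T S q hcard hT hq
    obtain ⟨hedges, hconn, hcount⟩ := id hT
    have hScard : S.card = n + 2 := by omega
    set deg : α → ℕ := fun i => (T.filter fun e => i ∈ e).card with hdeg
    have hdeg1 : ∀ i ∈ S, 1 ≤ deg i := by
      intro i hi
      have h2 : 1 < S.card := by omega
      obtain ⟨j, hj, hji⟩ := Finset.exists_mem_ne h2 i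
      rcases (hconn i hi j hj).cases_head with rfl | ⟨b, hb, -⟩
      · exact absurd rfl hji
      · exact Finset.card_pos.2 ⟨s(i, b), Finset.mem_filter.2 ⟨hb, by simp⟩⟩
    have hsum : ∑ i ∈ S, deg i = 2 * T.card := by
      have hswap : ∑ i ∈ S, deg i = ∑ e ∈ T, (S.filter fun i => i ∈ e).card := by
        simp only [hdeg, Finset.card_filter]
        rw [Finset.sum_comm]
      have h2 : ∀ e ∈ T, (S.filter fun i => i ∈ e).card = 2 := by
        intro e he
        obtain ⟨a, b, hab, rfl, -, haS, hbS⟩ := hedges e he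
        have hfil : S.filter (fun i => i ∈ s(a, b)) = {a, b} := by
          ext i
          simp only [Finset.mem_filter, Sym2.mem_iff, Finset.mem_insert, Finset.mem_singleton]
          constructor
          · exact fun h => h.2
          · rintro (rfl | rfl)
            exacts [⟨haS, Or.inl rfl⟩, ⟨hbS, Or.inr rfl⟩]
        rw [hfil, Finset.card_insert_of_notMem (by simp [hab]), Finset.card_singleton]
      rw [hswap, Finset.sum_congr rfl h2, Finset.sum_const, smul_eq_mul, mul_comm]
    have hleaf : ∃ l ∈ S, l ≠ q ∧ deg l = 1 := by
      by_contra hno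
      push_neg at hno
      have h2 : ∀ l ∈ S.erase q, 2 ≤ deg l := by
        intro l hl
        obtain ⟨hlq, hlS⟩ := Finset.mem_erase.1 hl
        have ha := hno l hlS hlq
        have hb := hdeg1 l hlS
        omega
      have hgq := hdeg1 q hq
      have hsum2 : ∑ i ∈ S, deg i = deg q + ∑ i ∈ S.erase q, deg i :=
        (Finset.add_sum_erase S deg hq).symm
      have hsumle : ∑ _i ∈ S.erase q, (2 : ℕ) ≤ ∑ i ∈ S.erase q, deg i := Finset.sum_le_sum h2
      rw [Finset.sum_const, smul_eq_mul, Finset.card_erase_of_mem hq] at hsumle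
      omega
    obtain ⟨l, hlS, hlq, hldeg⟩ := hleaf
    obtain ⟨e0, he0⟩ := Finset.card_eq_one.1 hldeg
    have he0mem : e0 ∈ T.filter fun e => l ∈ e := he0 ▸ Finset.mem_singleton_self e0
    have he0T : e0 ∈ T := (Finset.mem_filter.1 he0mem).1
    have hle0 : l ∈ e0 := (Finset.mem_filter.1 he0mem).2
    have huniq : ∀ e ∈ T, l ∈ e → e = e0 := by
      intro e he hle
      have hmem : e ∈ T.filter fun e => l ∈ e := Finset.mem_filter.2 ⟨he, hle⟩
      rw [he0] at hmem
      exact Finset.mem_singleton.1 hmem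
    obtain ⟨m, hml, hmS, he0lm, hlmE⟩ :
        ∃ m, m ≠ l ∧ m ∈ S ∧ e0 = s(l, m) ∧ (l, m) ∈ P.edges := by
      obtain ⟨a, b, hab, habe, habE, haS, hbS⟩ := hedges e0 he0T
      rw [habe, Sym2.mem_iff] at hle0
      rcases hle0 with rfl | rfl
      · exact ⟨b, Ne.symm hab, hbS, habe, habE⟩
      · exact ⟨a, hab, haS, habe.trans Sym2.eq_swap, P.symm_mem _ _ habE⟩
    set T' := T.erase e0 with hT'def
    set S' := S.erase l with hS'def
    have avoid : ∀ x y, Relation.ReflTransGen (fun a b => s(a, b) ∈ T) x y → y ≠ l →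
        (x = l ∧ Relation.ReflTransGen (fun a b => s(a, b) ∈ T') m y) ∨
        Relation.ReflTransGen (fun a b => s(a, b) ∈ T') x y := by
      intro x y hxy hyl
      induction hxy using Relation.ReflTransGen.head_induction_on with
      | refl => exact Or.inr Relation.ReflTransGen.refl
      | @head u c hstep htail ih2 =>
        by_cases hul : u = l
        · subst hul
          have hc : c = m := by
            have he := huniq _ hstep (by simp)
            rw [he0lm] at he
            rcases Sym2.eq_iff.1 he with ⟨-, h2⟩ | ⟨h1, -⟩
            · exact h2
            · exact absurd h1.symm hml
          subst hc
          rcases ih2 with ⟨hcl, -⟩ | hcy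
          · exact absurd hcl hml
          · exact Or.inl ⟨rfl, hcy⟩
        · rcases ih2 with ⟨rfl, hmy⟩ | hcy
          · have hu : u = m := by
              have he := huniq _ hstep (by simp)
              rw [he0lm] at he
              rcases Sym2.eq_iff.1 he with ⟨h1, -⟩ | ⟨h1, -⟩
              · exact absurd h1 hul
              · exact h1
            subst hu
            exact Or.inr hmy
          · by_cases hcl : c = l
            · subst hcl
              exfalso
              rcases hcy.cases_head with rfl | ⟨d, hd, -⟩
              · exact hyl rfl
              · have hdT : s(c, d) ∈ T := Finset.mem_of_mem_erase hd
                exact (Finset.mem_erase.1 hd).1 (huniq _ hdT (by simp))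
            · have hne0 : s(u, c) ≠ e0 := by
                intro hE
                rw [he0lm] at hE
                rcases Sym2.eq_iff.1 hE with ⟨h1, -⟩ | ⟨-, h2⟩
                · exact hul h1
                · exact hcl h2
              exact Or.inr (Relation.ReflTransGen.head
                (Finset.mem_erase.2 ⟨hne0, hstep⟩) hcy)
    have hT'tree : IsUTreeOn P T' S' := by
      refine ⟨?_, ?_, ?_⟩
      · intro e he
        obtain ⟨i, j, hij, rfl, hijE, hiS, hjS⟩ := hedges e (Finset.mem_of_mem_erase he)
        have hne0 : s(i, j) ≠ e0 := (Finset.mem_erase.1 he).1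
        have hil : i ≠ l := fun h =>
          hne0 (huniq _ (Finset.mem_of_mem_erase he) (by rw [h]; simp))
        have hjl : j ≠ l := fun h =>
          hne0 (huniq _ (Finset.mem_of_mem_erase he) (by rw [h]; simp))
        exact ⟨i, j, hij, rfl, hijE, Finset.mem_erase.2 ⟨hil, hiS⟩,
          Finset.mem_erase.2 ⟨hjl, hjS⟩⟩
      · intro i hi j hj
        obtain ⟨hil, hiS⟩ := Finset.mem_erase.1 hi
        obtain ⟨hjl, hjS⟩ := Finset.mem_erase.1 hj
        rcases avoid i j (hconn i hiS j hjS) hjl with ⟨h1, -⟩ | hp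
        · exact absurd h1 hil
        · exact hp
      · rw [hT'def, hS'def, Finset.card_erase_of_mem he0T, Finset.card_erase_of_mem hlS]
        omega
    have hqS' : q ∈ S' := Finset.mem_erase.2 ⟨Ne.symm hlq, hq⟩
    have hT'card : T'.card = n := by
      rw [hT'def, Finset.card_erase_of_mem he0T, hcard]
      omega
    obtain ⟨Tq', hTq', hun'⟩ := ih T' S' q hT'card hT'tree hqS'
    have hlm_notin : ∀ a ∈ Tq', a.1 ≠ l := fun a ha =>
      (Finset.mem_erase.1 (hTq'.2.2.1 a ha).1).1
    refine ⟨insert (l, m) Tq', ⟨hq, ?_, ?_, ?_, ?_, ?_⟩, ?_⟩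
    · intro a ha
      rcases Finset.mem_insert.1 ha with rfl | haT'
      · exact Finset.mem_filter.2 ⟨hlmE, Ne.symm hml⟩
      · exact hTq'.2.1 haT'
    · intro a ha
      rcases Finset.mem_insert.1 ha with rfl | haT'
      · exact ⟨hlS, hmS⟩
      · exact ⟨Finset.mem_of_mem_erase (hTq'.2.2.1 a haT').1,
          Finset.mem_of_mem_erase (hTq'.2.2.1 a haT').2⟩
    · intro i hiS hiq
      by_cases hil : i = l
      · subst hil
        refine ⟨m, Finset.mem_insert_self _ _, ?_⟩
        intro j hj
        rcases Finset.mem_insert.1 hj with hjm | hjT'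
        · exact congrArg Prod.snd hjm
        · exact absurd rfl (hlm_notin _ hjT')
      · obtain ⟨j, hjmem, hju⟩ := hTq'.2.2.2.1 i (Finset.mem_erase.2 ⟨hil, hiS⟩) hiq
        refine ⟨j, Finset.mem_insert_of_mem hjmem, ?_⟩
        intro k hk
        rcases Finset.mem_insert.1 hk with hkm | hkT'
        · exact absurd (congrArg Prod.fst hkm) hil
        · exact hju k hkT'
    · intro j hj
      rcases Finset.mem_insert.1 hj with hqm | hjT'
      · exact hlq (congrArg Prod.fst hqm).symm
      · exact hTq'.2.2.2.2.1 j hjT'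
    · intro i hiS
      have hmono : ∀ x, Relation.ReflTransGen (arcRel Tq') x q →
          Relation.ReflTransGen (arcRel (insert (l, m) Tq')) x q := fun x hx =>
        Relation.ReflTransGen.mono (fun a b hab => Finset.mem_insert_of_mem hab) _ _ hx
      by_cases hil : i = l
      · subst hil
        exact Relation.ReflTransGen.head (Finset.mem_insert_self _ _)
          (hmono m (hTq'.2.2.2.2.2 m (Finset.mem_erase.2 ⟨hml, hmS⟩)))
      · exact hmono i (hTq'.2.2.2.2.2 i (Finset.mem_erase.2 ⟨hil, hiS⟩))
    · rw [undir, Finset.image_insert]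
      rw [show Tq'.image (fun a => s(a.1, a.2)) = undir Tq' from rfl, hun', ← he0lm,
        Finset.insert_erase he0T]

/-- Assertion 9.  If `S ⊊ N`, `𝓣_S ≠ ∅`, and `P` has an edge
joining `S` to its complement, then
`λ^∘_S - λ^•_S = min {p q r : q ∈ S, r ∉ S, (q,r) an edge of P} - min_{t ∈ S} p t t`. -/
theorem statement16 (P : PotGraph α) (S : Finset α) (hS : S ⊂ Finset.univ)
    (hne : ∃ T, IsUTreeOn P T S)
    (hcross : ∃ e : α × α, e.1 ∈ S ∧ e.2 ∉ S ∧ e ∈ P.edges) :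
    lamCirc (bw P) (barcs P) S - lamBul (bw P) (barcs P) S =
      sInf ((fun e : α × α => ((P.p e.1 e.2 : ℝ) : EReal)) ''
          {e : α × α | e.1 ∈ S ∧ e.2 ∉ S ∧ e ∈ P.edges}) -
        sInf ((fun t => ((P.p t t : ℝ) : EReal)) '' (↑S : Set α)) := by
  classical
  have hSne : S.Nonempty := by
    obtain ⟨e, he1, -, -⟩ := hcross
    exact ⟨e.1, he1⟩
  obtain ⟨T0, hT0mem, -, hnumin⟩ :=
    minW_exists {T | IsUTreeOn P T S} (Set.toFinite _) hne (uweight P)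
  obtain ⟨t0, ht0S, hloop, hloopmin⟩ :=
    minW_exists (↑S : Set α) (Set.toFinite _) (by exact_mod_cast hSne) (fun t => P.p t t)
  have ht0S' : t0 ∈ S := by exact_mod_cast ht0S
  have hcrossne : {e : α × α | e.1 ∈ S ∧ e.2 ∉ S ∧ e ∈ P.edges}.Nonempty := hcross
  obtain ⟨e0, he0mem, hcrossInf, hcrossmin⟩ :=
    minW_exists {e : α × α | e.1 ∈ S ∧ e.2 ∉ S ∧ e ∈ P.edges} (Set.toFinite _) hcrossne
      (fun e => P.p e.1 e.2)
  have hBul : lamBul (bw P) (barcs P) S =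
      ((uweight P T0 - (∑ i ∈ S, P.p i i - P.p t0 t0) : ℝ) : EReal) := by
    apply le_antisymm
    · obtain ⟨Tq, hTq, hund⟩ := orient P T0.card T0 S t0 rfl hT0mem ht0S'
      have hval : aweight (bw P) Tq = uweight P T0 - (∑ i ∈ S, P.p i i - P.p t0 t0) := by
        rw [aweight_eq P hTq, hund]
      have hmemB : Tq ∈ {T | ∃ q ∈ S, IsTreeOn (barcs P) T S q} :=
        (⟨t0, ht0S', hTq⟩ : ∃ q ∈ S, IsTreeOn (barcs P) Tq S q)
      calc lamBul (bw P) (barcs P) S ≤ (aweight (bw P) Tq : EReal) := minW_le hmemB _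
        _ = _ := by rw [hval]
    · refine le_minW _ _ ?_
      rintro Tq ⟨q, hqS, hTq⟩
      rw [aweight_eq P hTq]
      have h1 : uweight P T0 ≤ uweight P (undir Tq) := hnumin _ (undir_utree P hTq)
      have h2 : P.p t0 t0 ≤ P.p q q := hloopmin q hqS
      exact_mod_cast (by linarith :
        uweight P T0 - (∑ i ∈ S, P.p i i - P.p t0 t0) ≤
          uweight P (undir Tq) - (∑ i ∈ S, P.p i i - P.p q q))
  have hCirc : lamCirc (bw P) (barcs P) S =
      ((uweight P T0 - (∑ i ∈ S, P.p i i - P.p e0.1 e0.1) + bw P e0.1 e0.2 : ℝ) : EReal) := by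
    apply le_antisymm
    · obtain ⟨Tq, hTq, hund⟩ := orient P T0.card T0 S e0.1 rfl hT0mem he0mem.1
      have hbmem : (e0.1, e0.2) ∈ barcs P := by
        refine Finset.mem_filter.2 ⟨he0mem.2.2, ?_⟩
        intro h
        exact he0mem.2.1 (h ▸ he0mem.1)
      have hnotin : (e0.1, e0.2) ∉ Tq := fun h => hTq.2.2.2.2.1 e0.2 h
      have hmemC : insert (e0.1, e0.2) Tq ∈ {T | ∃ q ∈ S, IsCTreeOn (barcs P) T S q} :=
        (⟨e0.1, he0mem.1, e0.2, he0mem.2.1, Tq, hTq, hbmem, rfl⟩ :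
          ∃ q ∈ S, IsCTreeOn (barcs P) (insert (e0.1, e0.2) Tq) S q)
      have hval : aweight (bw P) (insert (e0.1, e0.2) Tq) =
          uweight P T0 - (∑ i ∈ S, P.p i i - P.p e0.1 e0.1) + bw P e0.1 e0.2 := by
        rw [aweight, Finset.sum_insert hnotin, ← aweight, aweight_eq P hTq, hund]
        ring
      calc lamCirc (bw P) (barcs P) S ≤ (aweight (bw P) (insert (e0.1, e0.2) Tq) : EReal) :=
            minW_le hmemC _
        _ = _ := by rw [hval]
    · refine le_minW _ _ ?_
      rintro T ⟨q, hqS, r, hrS, T', hT', hrE, rfl⟩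
      have hnotin : (q, r) ∉ T' := fun h => hT'.2.2.2.2.1 r h
      have hval : aweight (bw P) (insert (q, r) T') =
          uweight P (undir T') - (∑ i ∈ S, P.p i i - P.p q q) + bw P q r := by
        rw [aweight, Finset.sum_insert hnotin, ← aweight, aweight_eq P hT']
        ring
      rw [hval]
      have h1 : uweight P T0 ≤ uweight P (undir T') := hnumin _ (undir_utree P hT')
      have h2 : P.p e0.1 e0.2 ≤ P.p q r :=
        hcrossmin (q, r) ⟨hqS, hrS, (Finset.mem_filter.1 hrE).1⟩
      have h3 : bw P q r = P.p q r - P.p q q := rfl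
      have h4 : bw P e0.1 e0.2 = P.p e0.1 e0.2 - P.p e0.1 e0.1 := rfl
      exact_mod_cast (by rw [h3, h4]; linarith :
        uweight P T0 - (∑ i ∈ S, P.p i i - P.p e0.1 e0.1) + bw P e0.1 e0.2 ≤
          uweight P (undir T') - (∑ i ∈ S, P.p i i - P.p q q) + bw P q r)
  have hRloop : sInf ((fun t => ((P.p t t : ℝ) : EReal)) '' (↑S : Set α)) =
      ((P.p t0 t0 : ℝ) : EReal) := hloop
  have hRcross : sInf ((fun e : α × α => ((P.p e.1 e.2 : ℝ) : EReal)) ''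
      {e : α × α | e.1 ∈ S ∧ e.2 ∉ S ∧ e ∈ P.edges}) = ((P.p e0.1 e0.2 : ℝ) : EReal) := hcrossInf
  rw [hBul, hCirc, hRloop, hRcross, ← EReal.coe_sub, ← EReal.coe_sub]
  have h5 : bw P e0.1 e0.2 = P.p e0.1 e0.2 - P.p e0.1 e0.1 := rfl
  exact_mod_cast (by rw [h5]; ring :
    uweight P T0 - (∑ i ∈ S, P.p i i - P.p e0.1 e0.1) + bw P e0.1 e0.2 -
        (uweight P T0 - (∑ i ∈ S, P.p i i - P.p t0 t0)) =
      P.p e0.1 e0.2 - P.p t0 t0)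

end BarrierForests
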